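/- arXiv:2209.01336 — 3 statements merged into one kernel-verified Lean document; each statement's English description precedes it below -/
import Mathlib

section
/- Let L ∈ ℝ^{N×N} have SVD L = Σ_k σ_k u_k v_kᵀ with singular values 0 = σ₀ ≤ … ≤ σ_{N−1} in nondecreasing order and orthonormal systems {u_k}, {v_k}. For 1 ≤ M ≤ N and x ∈ ℝ^N define the bandlimited approximation x_M = (1/2) Σ_{k=0}^{M−1} (u_k u_kᵀ + v_k v_kᵀ) x. If σ_{M−1} > 0, then ‖x − x_M‖₂ ≤ (1/(2σ_{M−1})) (‖Lx‖₂ + ‖Lᵀx‖₂). -/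
open Matrix Finset

private lemma sum_sq_eq_dot {N : ℕ} (f : Fin N → ℝ) : ∑ i, (f i) ^ 2 = f ⬝ᵥ f := by
  simp [dotProduct, sq]

private lemma sum_sq_mulVec {N : ℕ} (W : Matrix (Fin N) (Fin N) ℝ)
    (hW : Wᵀ * W = 1) (c : Fin N → ℝ) :
    ∑ i, (W.mulVec c i) ^ 2 = ∑ k, (c k) ^ 2 := by
  rw [sum_sq_eq_dot, sum_sq_eq_dot, Matrix.dotProduct_mulVec,
    ← Matrix.mulVec_transpose, Matrix.mulVec_mulVec, hW, Matrix.one_mulVec]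

private lemma sqrt_tri {N : ℕ} (f g : Fin N → ℝ) :
    Real.sqrt (∑ i, (f i + g i) ^ 2) ≤
      Real.sqrt (∑ i, (f i) ^ 2) + Real.sqrt (∑ i, (g i) ^ 2) := by
  have key : ∀ h : Fin N → ℝ,
      Real.sqrt (∑ i, (h i) ^ 2) = ‖(WithLp.equiv 2 (Fin N → ℝ)).symm h‖ := by
    intro h
    rw [EuclideanSpace.norm_eq]
    simp [sq_abs]
  have hfg : (WithLp.equiv 2 (Fin N → ℝ)).symm (f + g) =
      (WithLp.equiv 2 (Fin N → ℝ)).symm f + (WithLp.equiv 2 (Fin N → ℝ)).symm g := rfl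
  calc Real.sqrt (∑ i, (f i + g i) ^ 2)
      = ‖(WithLp.equiv 2 (Fin N → ℝ)).symm (f + g)‖ := key (f + g)
    _ ≤ ‖(WithLp.equiv 2 (Fin N → ℝ)).symm f‖ + ‖(WithLp.equiv 2 (Fin N → ℝ)).symm g‖ := by
        rw [hfg]; exact norm_add_le _ _
    _ = _ := by rw [key f, key g]

/-- Bandlimiting approximation bound for the SVD-based graph Fourier transform:
`‖x − x_M‖₂ ≤ (‖Lx‖₂ + ‖Lᵀx‖₂) / (2 σ_{M−1})`. -/
theorem gft_bandlimiting_bound {N : ℕ}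
    (L U V : Matrix (Fin N) (Fin N) ℝ) (σ : Fin N → ℝ)
    (hU : Uᵀ * U = 1) (hV : Vᵀ * V = 1)
    (hσ0 : ∀ k, 0 ≤ σ k) (hσmono : Monotone σ)
    (hL : L = ∑ k, σ k • vecMulVec (fun i => U i k) (fun i => V i k))
    (x : Fin N → ℝ) (M : ℕ) (hM1 : 1 ≤ M) (hMN : M ≤ N)
    (hcut : 0 < σ ⟨M - 1, by omega⟩)
    (xM : Fin N → ℝ)
    (hxM : xM = (1 / 2 : ℝ) •
      ∑ k ∈ Finset.univ.filter (fun k : Fin N => (k : ℕ) < M),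
        (vecMulVec (fun i => U i k) (fun i => U i k) +
          vecMulVec (fun i => V i k) (fun i => V i k)).mulVec x) :
    Real.sqrt (∑ i, (x i - xM i) ^ 2) ≤
      (1 / (2 * σ ⟨M - 1, by omega⟩)) *
        (Real.sqrt (∑ i, (L.mulVec x i) ^ 2) +
          Real.sqrt (∑ i, (Lᵀ.mulVec x i) ^ 2)) := by
  set σc := σ ⟨M - 1, by omega⟩ with hσc
  set a : Fin N → ℝ := fun k => (fun i => U i k) ⬝ᵥ x with ha
  set b : Fin N → ℝ := fun k => (fun i => V i k) ⬝ᵥ x with hb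
  have hUU : U * Uᵀ = 1 := mul_eq_one_comm.mp hU
  have hVV : V * Vᵀ = 1 := mul_eq_one_comm.mp hV
  -- reconstruction of x
  have hxa : ∀ i, x i = ∑ k, U i k * a k := by
    intro i
    have := congrArg (fun A => A.mulVec x i) hUU
    simp only [Matrix.one_mulVec] at this
    rw [← this]
    simp [Matrix.mulVec, Matrix.mul_apply, dotProduct, ha, Finset.mul_sum,
      Finset.sum_mul, mul_assoc]
    rw [Finset.sum_comm]
  have hxb : ∀ i, x i = ∑ k, V i k * b k := by
    intro i
    have := congrArg (fun A => A.mulVec x i) hVV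
    simp only [Matrix.one_mulVec] at this
    rw [← this]
    simp [Matrix.mulVec, Matrix.mul_apply, dotProduct, hb, Finset.mul_sum,
      Finset.sum_mul, mul_assoc]
    rw [Finset.sum_comm]
  -- truncated coefficients
  set a' : Fin N → ℝ := fun k => if M ≤ (k : ℕ) then a k else 0 with ha'
  set b' : Fin N → ℝ := fun k => if M ≤ (k : ℕ) then b k else 0 with hb'
  -- residual identity
  have hres : ∀ i, x i - xM i =
      (1 / 2 : ℝ) * (U.mulVec a' i + V.mulVec b' i) := by
    intro i
    have h1 : xM i = (1 / 2 : ℝ) *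
        ∑ k ∈ Finset.univ.filter (fun k : Fin N => (k : ℕ) < M),
          (U i k * a k + V i k * b k) := by
      rw [hxM]
      simp only [Pi.smul_apply, smul_eq_mul, Finset.sum_apply]
      congr 1
      refine Finset.sum_congr rfl fun k _ => ?_
      simp only [Matrix.add_mulVec, Pi.add_apply]
      congr 1 <;>
        simp [Matrix.mulVec, Matrix.vecMulVec_apply, dotProduct, ha, hb,
          Finset.mul_sum, mul_assoc]
    have hsplit : ∀ (c : Fin N → ℝ) (W : Matrix (Fin N) (Fin N) ℝ),
        ∑ k, W i k * c k =
          (∑ k ∈ Finset.univ.filter (fun k : Fin N => (k : ℕ) < M), W i k * c k) +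
            ∑ k, W i k * (if M ≤ (k : ℕ) then c k else 0) := by
      intro c W
      rw [← Finset.sum_filter_add_sum_filter_not Finset.univ
        (fun k : Fin N => (k : ℕ) < M) (fun k => W i k * c k)]
      congr 1
      rw [Finset.sum_filter]
      refine Finset.sum_congr rfl fun k _ => ?_
      by_cases h : (k : ℕ) < M
      · simp [h, Nat.not_le.mpr h]
      · simp [h, Nat.not_lt.mp h]
    have hUi : U.mulVec a' i = ∑ k, U i k * a' k := by
      simp [Matrix.mulVec, dotProduct]
    have hVi : V.mulVec b' i = ∑ k, V i k * b' k := by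
      simp [Matrix.mulVec, dotProduct]
    have e1 := hsplit a U
    have e2 := hsplit b V
    have hx2 : x i = (1/2 : ℝ) * (∑ k, U i k * a k + ∑ k, V i k * b k) := by
      rw [← hxa i, ← hxb i]; ring
    rw [hx2, h1, hUi, hVi, e1, e2, ha', hb']
    simp only [Finset.sum_add_distrib]
    ring
  -- L x and Lᵀ x via coefficients
  have hLx : L.mulVec x = U.mulVec (fun k => σ k * b k) := by
    rw [hL]
    funext i
    simp only [Matrix.mulVec, dotProduct, Matrix.sum_apply, Matrix.smul_apply,
      Matrix.vecMulVec_apply, smul_eq_mul, Finset.sum_mul, Finset.mul_sum, hb]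
    rw [Finset.sum_comm]
    refine Finset.sum_congr rfl fun k _ => Finset.sum_congr rfl fun j _ => by ring
  have hLTx : Lᵀ.mulVec x = V.mulVec (fun k => σ k * a k) := by
    rw [hL]
    funext i
    simp only [Matrix.mulVec, dotProduct, Matrix.transpose_apply, Matrix.sum_apply,
      Matrix.smul_apply, Matrix.vecMulVec_apply, smul_eq_mul, Finset.sum_mul,
      Finset.mul_sum, ha]
    rw [Finset.sum_comm]
    refine Finset.sum_congr rfl fun k _ => Finset.sum_congr rfl fun j _ => by ring
  -- spectral bounds
  have hbound : ∀ c : Fin N → ℝ,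
      σc ^ 2 * ∑ k : Fin N, (if M ≤ (k : ℕ) then c k else 0) ^ 2 ≤
        ∑ k : Fin N, (σ k * c k) ^ 2 := by
    intro c
    rw [Finset.mul_sum]
    refine Finset.sum_le_sum fun k _ => ?_
    by_cases h : M ≤ (k : ℕ)
    · simp only [if_pos h]
      have hle : σc ≤ σ k := hσmono (by simp [Fin.le_def]; omega)
      have h2 : σc ^ 2 ≤ σ k ^ 2 := pow_le_pow_left₀ hcut.le hle 2
      calc σc ^ 2 * c k ^ 2 ≤ σ k ^ 2 * c k ^ 2 :=
            mul_le_mul_of_nonneg_right h2 (sq_nonneg _)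
        _ = (σ k * c k) ^ 2 := by ring
    · simp [if_neg h, sq_nonneg]
  have hsb : ∀ c : Fin N → ℝ,
      Real.sqrt (∑ k : Fin N, (if M ≤ (k : ℕ) then c k else 0) ^ 2) ≤
        Real.sqrt (∑ k : Fin N, (σ k * c k) ^ 2) / σc := by
    intro c
    rw [le_div_iff₀ hcut]
    calc Real.sqrt (∑ k : Fin N, (if M ≤ (k : ℕ) then c k else 0) ^ 2) * σc
        = Real.sqrt (σc ^ 2 * ∑ k : Fin N, (if M ≤ (k : ℕ) then c k else 0) ^ 2) := by
          rw [Real.sqrt_mul (sq_nonneg _), Real.sqrt_sq hcut.le]; ring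
      _ ≤ Real.sqrt (∑ k : Fin N, (σ k * c k) ^ 2) := Real.sqrt_le_sqrt (hbound c)
  -- assemble
  have key : Real.sqrt (∑ i, (x i - xM i) ^ 2) =
      (1 / 2 : ℝ) * Real.sqrt (∑ i, (U.mulVec a' i + V.mulVec b' i) ^ 2) := by
    have : ∀ i, (x i - xM i) ^ 2 =
        (1 / 4 : ℝ) * (U.mulVec a' i + V.mulVec b' i) ^ 2 := by
      intro i; rw [hres i]; ring
    rw [Finset.sum_congr rfl fun i _ => this i, ← Finset.mul_sum,
      Real.sqrt_mul (by norm_num),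
      show Real.sqrt (1/4 : ℝ) = 1/2 by
        rw [show (1/4 : ℝ) = (1/2) ^ 2 by norm_num, Real.sqrt_sq (by norm_num)]]
  rw [key]
  have t1 := sqrt_tri (U.mulVec a') (V.mulVec b')
  have hA : ∑ i, (U.mulVec a' i) ^ 2 = ∑ k, (a' k) ^ 2 := sum_sq_mulVec U hU a'
  have hB : ∑ i, (V.mulVec b' i) ^ 2 = ∑ k, (b' k) ^ 2 := sum_sq_mulVec V hV b'
  have hLTnorm : ∑ i, (Lᵀ.mulVec x i) ^ 2 = ∑ k, (σ k * a k) ^ 2 := by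
    rw [hLTx]; exact sum_sq_mulVec V hV _
  have hLnorm : ∑ i, (L.mulVec x i) ^ 2 = ∑ k, (σ k * b k) ^ 2 := by
    rw [hLx]; exact sum_sq_mulVec U hU _
  have hA' : Real.sqrt (∑ k, (a' k) ^ 2) ≤
      Real.sqrt (∑ i, (Lᵀ.mulVec x i) ^ 2) / σc := by
    rw [hLTnorm]; exact hsb a
  have hB' : Real.sqrt (∑ k, (b' k) ^ 2) ≤
      Real.sqrt (∑ i, (L.mulVec x i) ^ 2) / σc := by
    rw [hLnorm]; exact hsb b
  rw [hA, hB] at t1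
  calc (1 / 2 : ℝ) * Real.sqrt (∑ i, (U.mulVec a' i + V.mulVec b' i) ^ 2)
      ≤ (1 / 2 : ℝ) * (Real.sqrt (∑ k, (a' k) ^ 2) + Real.sqrt (∑ k, (b' k) ^ 2)) := by
        linarith
    _ ≤ (1 / 2 : ℝ) * (Real.sqrt (∑ i, (Lᵀ.mulVec x i) ^ 2) / σc +
          Real.sqrt (∑ i, (L.mulVec x i) ^ 2) / σc) := by linarith
    _ = (1 / (2 * σc)) * (Real.sqrt (∑ i, (L.mulVec x i) ^ 2) +
          Real.sqrt (∑ i, (Lᵀ.mulVec x i) ^ 2)) := by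
        field_simp
        ring
end

section
/- Let L_l = Σ_i σ_{l,i} u_{l,i} v_{l,i}ᵀ (l = 1, 2) be SVDs of L₁ ∈ ℝ^{N₁×N₁}, L₂ ∈ ℝ^{N₂×N₂} with nonnegative singular values and orthonormal systems. Let μ₀ ≤ μ₁ ≤ … ≤ μ_{N−1} (N = N₁N₂) be the values σ_{1,i} + σ_{2,j} arranged in ascending order, let 1 ≤ M ≤ N with μ_{M−1} > 0, let S_M be the set of pairs (i,j) with σ_{1,i} + σ_{2,j} equal to some μ_k with 0 ≤ k ≤ M−1, and define x_{M,⊗} = (1/2) Σ_{(i,j)∈S_M} [ (u_{1,i}⊗u_{2,j})(u_{1,i}⊗u_{2,j})ᵀ + (v_{1,i}⊗v_{2,j})(v_{1,i}⊗v_{2,j})ᵀ ] x. Then ‖x − x_{M,⊗}‖₂ ≤ (1/(2μ_{M−1})) ( ‖(L₁⊗I_{N₂})x‖₂ + ‖(L₁ᵀ⊗I_{N₂})x‖₂ + ‖(I_{N₁}⊗L₂)x‖₂ + ‖(I_{N₁}⊗L₂ᵀ)x‖₂ ). -/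
open Matrix Finset
open scoped Kronecker Classical

section GftAux

variable {m n : Type*} [Fintype m] [Fintype n]

private lemma gft_dot_prod_mul (f f' : m → ℝ) (g g' : n → ℝ) :
    dotProduct (fun q : m × n => f q.1 * g q.2) (fun q : m × n => f' q.1 * g' q.2)
      = dotProduct f f' * dotProduct g g' := by
  simp only [dotProduct, Fintype.sum_prod_type, Finset.sum_mul, Finset.mul_sum]
  rw [Finset.sum_comm]
  exact Finset.sum_congr rfl fun a _ => Finset.sum_congr rfl fun b _ => by ring

private lemma gft_kron_mulVec (A : Matrix m m ℝ) (B : Matrix n n ℝ) (f : m → ℝ) (g : n → ℝ) :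
    (A ⊗ₖ B).mulVec (fun q : m × n => f q.1 * g q.2)
      = fun q => A.mulVec f q.1 * B.mulVec g q.2 := by
  funext q
  simp only [Matrix.mulVec, dotProduct, kroneckerMap_apply, Fintype.sum_prod_type,
    Finset.sum_mul, Finset.mul_sum]
  rw [Finset.sum_comm]
  exact Finset.sum_congr rfl fun a _ => Finset.sum_congr rfl fun b _ => by ring

private lemma gft_vecMulVec_mulVec (u v w : m → ℝ) :
    (vecMulVec u v).mulVec w = dotProduct v w • u := by
  funext a
  simp only [Matrix.mulVec, dotProduct, vecMulVec_apply, Pi.smul_apply, smul_eq_mul,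
    Finset.sum_mul]
  exact Finset.sum_congr rfl fun b _ => by ring

private lemma gft_sum_mulVec {κ : Type*} (s : Finset κ) (A : κ → Matrix m n ℝ) (w : n → ℝ) :
    (∑ i ∈ s, A i).mulVec w = ∑ i ∈ s, (A i).mulVec w := by
  funext a
  simp only [Matrix.mulVec, dotProduct, Matrix.sum_apply, Finset.sum_apply, Finset.sum_mul]
  rw [Finset.sum_comm]

private lemma gft_vecMulVec_transpose (u v : m → ℝ) :
    (vecMulVec u v)ᵀ = vecMulVec v u := by
  ext a b
  simp [vecMulVec_apply, mul_comm]

private lemma gft_svd_mulVec [DecidableEq m] {L : Matrix m m ℝ} {σ : m → ℝ} {u v : m → m → ℝ}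
    (hv : ∀ i i', dotProduct (v i) (v i') = if i = i' then 1 else 0)
    (hL : L = ∑ i, σ i • vecMulVec (u i) (v i)) (i : m) :
    L.mulVec (v i) = σ i • u i := by
  rw [hL, gft_sum_mulVec]
  have h : ∀ i' : m, (σ i' • vecMulVec (u i') (v i')).mulVec (v i)
      = (if i' = i then σ i' • u i' else 0) := by
    intro i'
    rw [smul_mulVec, gft_vecMulVec_mulVec, hv]
    split <;> simp
  rw [Finset.sum_congr rfl fun i' _ => h i']
  simp

private lemma gft_sqrt_sum_sq_add_le {ι : Type*} (s : Finset ι) (α β : ι → ℝ) :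
    Real.sqrt (∑ i ∈ s, (α i + β i) ^ 2)
      ≤ Real.sqrt (∑ i ∈ s, α i ^ 2) + Real.sqrt (∑ i ∈ s, β i ^ 2) := by
  have hA : (0:ℝ) ≤ ∑ i ∈ s, α i ^ 2 := Finset.sum_nonneg fun _ _ => sq_nonneg _
  have hB : (0:ℝ) ≤ ∑ i ∈ s, β i ^ 2 := Finset.sum_nonneg fun _ _ => sq_nonneg _
  have hCS := Real.sum_mul_le_sqrt_mul_sqrt s α β
  have h1 : ∑ i ∈ s, (α i + β i) ^ 2
      ≤ (Real.sqrt (∑ i ∈ s, α i ^ 2) + Real.sqrt (∑ i ∈ s, β i ^ 2)) ^ 2 := by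
    have hexp : ∑ i ∈ s, (α i + β i) ^ 2
        = (∑ i ∈ s, α i ^ 2) + 2 * (∑ i ∈ s, α i * β i) + ∑ i ∈ s, β i ^ 2 := by
      rw [Finset.mul_sum, ← Finset.sum_add_distrib, ← Finset.sum_add_distrib]
      exact Finset.sum_congr rfl fun i _ => by ring
    rw [hexp, add_sq, Real.sq_sqrt hA, Real.sq_sqrt hB]
    linarith
  calc Real.sqrt (∑ i ∈ s, (α i + β i) ^ 2)
      ≤ Real.sqrt ((Real.sqrt (∑ i ∈ s, α i ^ 2) + Real.sqrt (∑ i ∈ s, β i ^ 2)) ^ 2) :=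
        Real.sqrt_le_sqrt h1
    _ = _ := Real.sqrt_sq (by positivity)

/-- The identity map `(ι → ℝ) ≃ₗ EuclideanSpace ℝ ι`. -/
noncomputable def gftToE (ι : Type*) [Fintype ι] : (ι → ℝ) ≃ₗ[ℝ] EuclideanSpace ℝ ι :=
  (WithLp.linearEquiv 2 ℝ (ι → ℝ)).symm

private lemma gftToE_apply {ι : Type*} [Fintype ι] (f : ι → ℝ) (q : ι) : gftToE ι f q = f q :=
  rfl

private lemma gft_inner_toE {ι : Type*} [Fintype ι] (f g : ι → ℝ) :
    (inner ℝ (gftToE ι f) (gftToE ι g) : ℝ) = dotProduct f g := by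
  simp only [PiLp.inner_apply, RCLike.inner_apply, conj_trivial, dotProduct]
  exact Finset.sum_congr rfl fun i _ => mul_comm _ _

private lemma gft_norm_toE {ι : Type*} [Fintype ι] (f : ι → ℝ) :
    ‖gftToE ι f‖ = Real.sqrt (∑ i, f i ^ 2) := by
  rw [EuclideanSpace.norm_eq]
  congr 1
  exact Finset.sum_congr rfl fun i _ => by
    rw [gftToE_apply, Real.norm_eq_abs, sq_abs]

private lemma gft_on_prod [DecidableEq m] [DecidableEq n] {f : m → m → ℝ} {g : n → n → ℝ}
    (hf : ∀ i i', dotProduct (f i) (f i') = if i = i' then 1 else 0)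
    (hg : ∀ j j', dotProduct (g j) (g j') = if j = j' then 1 else 0) :
    Orthonormal ℝ (fun p : m × n => gftToE (m × n) (fun q : m × n => f p.1 q.1 * g p.2 q.2)) := by
  rw [orthonormal_iff_ite]
  intro p q
  rw [gft_inner_toE, gft_dot_prod_mul, hf, hg]
  by_cases h1 : p.1 = q.1 <;> by_cases h2 : p.2 = q.2 <;>
    simp [Prod.ext_iff, h1, h2]

private lemma gft_sqrt_bessel {ι : Type*} [Fintype ι] {v : ι → EuclideanSpace ℝ ι}
    (hv : Orthonormal ℝ v) (y : EuclideanSpace ℝ ι) (s : Finset ι) :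
    Real.sqrt (∑ p ∈ s, (inner ℝ (v p) y : ℝ) ^ 2) ≤ ‖y‖ := by
  have h : ∑ p ∈ s, (inner ℝ (v p) y : ℝ) ^ 2 ≤ ‖y‖ ^ 2 := by
    simpa [Real.norm_eq_abs, sq_abs] using hv.sum_inner_products_le (x := y) (s := s)
  calc Real.sqrt (∑ p ∈ s, (inner ℝ (v p) y : ℝ) ^ 2) ≤ Real.sqrt (‖y‖ ^ 2) := Real.sqrt_le_sqrt h
    _ = ‖y‖ := Real.sqrt_sq (norm_nonneg y)

private lemma gft_norm_sum_smul {ι : Type*} [Fintype ι] {v : ι → EuclideanSpace ℝ ι}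
    (hv : Orthonormal ℝ v) (c : ι → ℝ) (s : Finset ι) :
    ‖∑ p ∈ s, c p • v p‖ = Real.sqrt (∑ p ∈ s, c p ^ 2) := by
  have h2 : ‖∑ p ∈ s, c p • v p‖ ^ 2 = ∑ p ∈ s, c p ^ 2 := by
    rw [← real_inner_self_eq_norm_sq, hv.inner_sum c c s]
    exact Finset.sum_congr rfl fun p _ => by simp [sq]
  rw [← Real.sqrt_sq (norm_nonneg (∑ p ∈ s, c p • v p)), h2]

private lemma gft_dot_kron_mulVec (A : Matrix m m ℝ) (B : Matrix n n ℝ)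
    (f : m → ℝ) (g : n → ℝ) (x : m × n → ℝ) :
    dotProduct (fun q : m × n => f q.1 * g q.2) ((Aᵀ ⊗ₖ Bᵀ).mulVec x)
      = dotProduct (fun q : m × n => A.mulVec f q.1 * B.mulVec g q.2) x := by
  rw [Matrix.dotProduct_mulVec, ← Matrix.mulVec_transpose, ← kroneckerMap_transpose,
    transpose_transpose, transpose_transpose, gft_kron_mulVec]

private lemma gft_dot_scaled_left (c : ℝ) (f : m → ℝ) (g : n → ℝ) (x : m × n → ℝ) :
    dotProduct (fun q : m × n => (c • f) q.1 * g q.2) x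
      = c * dotProduct (fun q : m × n => f q.1 * g q.2) x := by
  simp only [dotProduct, Pi.smul_apply, smul_eq_mul, Finset.mul_sum]
  exact Finset.sum_congr rfl fun q _ => by ring

private lemma gft_dot_scaled_right (c : ℝ) (f : m → ℝ) (g : n → ℝ) (x : m × n → ℝ) :
    dotProduct (fun q : m × n => f q.1 * (c • g) q.2) x
      = c * dotProduct (fun q : m × n => f q.1 * g q.2) x := by
  simp only [dotProduct, Pi.smul_apply, smul_eq_mul, Finset.mul_sum]
  exact Finset.sum_congr rfl fun q _ => by ring

end GftAux

/-- Theorem 3: bandlimiting approximation bound for the factor-wise graph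
Fourier transform `F_⊗` on the Cartesian product of two directed graphs. -/
theorem gft_otimes_bandlimiting_bound {N₁ N₂ : ℕ}
    (L₁ : Matrix (Fin N₁) (Fin N₁) ℝ) (L₂ : Matrix (Fin N₂) (Fin N₂) ℝ)
    (σ₁ : Fin N₁ → ℝ) (σ₂ : Fin N₂ → ℝ)
    (u₁ v₁ : Fin N₁ → (Fin N₁ → ℝ)) (u₂ v₂ : Fin N₂ → (Fin N₂ → ℝ))
    (hσ₁ : ∀ i, 0 ≤ σ₁ i) (hσ₂ : ∀ j, 0 ≤ σ₂ j)
    (hu₁ : ∀ i i', dotProduct (u₁ i) (u₁ i') = if i = i' then 1 else 0)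
    (hv₁ : ∀ i i', dotProduct (v₁ i) (v₁ i') = if i = i' then 1 else 0)
    (hu₂ : ∀ j j', dotProduct (u₂ j) (u₂ j') = if j = j' then 1 else 0)
    (hv₂ : ∀ j j', dotProduct (v₂ j) (v₂ j') = if j = j' then 1 else 0)
    (hL₁ : L₁ = ∑ i, σ₁ i • vecMulVec (u₁ i) (v₁ i))
    (hL₂ : L₂ = ∑ j, σ₂ j • vecMulVec (u₂ j) (v₂ j))
    -- `μ` is the ascending rearrangement of the sums `σ_{1,i} + σ_{2,j}`
    (μ : Fin (N₁ * N₂) → ℝ) (hμmono : Monotone μ)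
    (e : Fin N₁ × Fin N₂ ≃ Fin (N₁ * N₂))
    (hμ : ∀ p : Fin N₁ × Fin N₂, μ (e p) = σ₁ p.1 + σ₂ p.2)
    (M : ℕ) (hM1 : 1 ≤ M) (hMN : M ≤ N₁ * N₂)
    (hcut : 0 < μ ⟨M - 1, by omega⟩)
    (SM : Finset (Fin N₁ × Fin N₂))
    (hSM : SM = Finset.univ.filter (fun p : Fin N₁ × Fin N₂ =>
      ∃ k : Fin (N₁ * N₂), (k : ℕ) < M ∧ σ₁ p.1 + σ₂ p.2 = μ k))
    (x xM : Fin N₁ × Fin N₂ → ℝ)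
    (hxM : xM = (1 / 2 : ℝ) • ∑ p ∈ SM,
      (vecMulVec (fun q : Fin N₁ × Fin N₂ => u₁ p.1 q.1 * u₂ p.2 q.2)
          (fun q : Fin N₁ × Fin N₂ => u₁ p.1 q.1 * u₂ p.2 q.2) +
        vecMulVec (fun q : Fin N₁ × Fin N₂ => v₁ p.1 q.1 * v₂ p.2 q.2)
          (fun q : Fin N₁ × Fin N₂ => v₁ p.1 q.1 * v₂ p.2 q.2)).mulVec x) :
    Real.sqrt (∑ i, (x i - xM i) ^ 2) ≤
      (1 / (2 * μ ⟨M - 1, by omega⟩)) *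
        (Real.sqrt (∑ i, ((L₁ ⊗ₖ (1 : Matrix (Fin N₂) (Fin N₂) ℝ)).mulVec x i) ^ 2) +
          Real.sqrt (∑ i, ((L₁ᵀ ⊗ₖ (1 : Matrix (Fin N₂) (Fin N₂) ℝ)).mulVec x i) ^ 2) +
          Real.sqrt (∑ i, (((1 : Matrix (Fin N₁) (Fin N₁) ℝ) ⊗ₖ L₂).mulVec x i) ^ 2) +
          Real.sqrt (∑ i, (((1 : Matrix (Fin N₁) (Fin N₁) ℝ) ⊗ₖ L₂ᵀ).mulVec x i) ^ 2)) := by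
  classical
  have hN : 0 < N₁ * N₂ := lt_of_lt_of_le hM1 hMN
  have hN₁ : 0 < N₁ := Nat.pos_of_ne_zero (by rintro rfl; simp at hN)
  have hN₂ : 0 < N₂ := Nat.pos_of_ne_zero (by rintro rfl; simp at hN)
  haveI hne : Nonempty (Fin N₁ × Fin N₂) := ⟨(⟨0, hN₁⟩, ⟨0, hN₂⟩)⟩
  have hM' : M - 1 < N₁ * N₂ := by omega
  set μstar : ℝ := μ ⟨M - 1, hM'⟩ with hμstardef
  have hμstar : 0 < μstar := hcut
  -- SVD action lemmas
  have hL₁v : ∀ i, L₁.mulVec (v₁ i) = σ₁ i • u₁ i := gft_svd_mulVec hv₁ hL₁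
  have hL₂v : ∀ j, L₂.mulVec (v₂ j) = σ₂ j • u₂ j := gft_svd_mulVec hv₂ hL₂
  have hL₁tdef : L₁ᵀ = ∑ i, σ₁ i • vecMulVec (v₁ i) (u₁ i) := by
    rw [hL₁, transpose_sum]
    exact Finset.sum_congr rfl fun i _ => by rw [transpose_smul, gft_vecMulVec_transpose]
  have hL₂tdef : L₂ᵀ = ∑ j, σ₂ j • vecMulVec (v₂ j) (u₂ j) := by
    rw [hL₂, transpose_sum]
    exact Finset.sum_congr rfl fun j _ => by rw [transpose_smul, gft_vecMulVec_transpose]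
  have hL₁t : ∀ i, L₁ᵀ.mulVec (u₁ i) = σ₁ i • v₁ i := gft_svd_mulVec hu₁ hL₁tdef
  have hL₂t : ∀ j, L₂ᵀ.mulVec (u₂ j) = σ₂ j • v₂ j := gft_svd_mulVec hu₂ hL₂tdef
  -- the four product families
  have honU : Orthonormal ℝ (fun p : (Fin N₁ × Fin N₂) => gftToE (Fin N₁ × Fin N₂) (fun q : (Fin N₁ × Fin N₂) => u₁ p.1 q.1 * u₂ p.2 q.2)) :=
    gft_on_prod hu₁ hu₂
  have honV : Orthonormal ℝ (fun p : (Fin N₁ × Fin N₂) => gftToE (Fin N₁ × Fin N₂) (fun q : (Fin N₁ × Fin N₂) => v₁ p.1 q.1 * v₂ p.2 q.2)) :=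
    gft_on_prod hv₁ hv₂
  have honW : Orthonormal ℝ (fun p : (Fin N₁ × Fin N₂) => gftToE (Fin N₁ × Fin N₂) (fun q : (Fin N₁ × Fin N₂) => v₁ p.1 q.1 * u₂ p.2 q.2)) :=
    gft_on_prod hv₁ hu₂
  have honZ : Orthonormal ℝ (fun p : (Fin N₁ × Fin N₂) => gftToE (Fin N₁ × Fin N₂) (fun q : (Fin N₁ × Fin N₂) => u₁ p.1 q.1 * v₂ p.2 q.2)) :=
    gft_on_prod hu₁ hv₂
  -- coefficients
  set a : (Fin N₁ × Fin N₂) → ℝ := fun p => dotProduct (fun q : (Fin N₁ × Fin N₂) => u₁ p.1 q.1 * u₂ p.2 q.2) x with hadef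
  set b : (Fin N₁ × Fin N₂) → ℝ := fun p => dotProduct (fun q : (Fin N₁ × Fin N₂) => v₁ p.1 q.1 * v₂ p.2 q.2) x with hbdef
  -- Parseval expansions
  have hcard : Fintype.card (Fin N₁ × Fin N₂) = Module.finrank ℝ (EuclideanSpace ℝ (Fin N₁ × Fin N₂)) := by simp
  have hxU : ∑ p : (Fin N₁ × Fin N₂), a p • gftToE (Fin N₁ × Fin N₂) (fun q : (Fin N₁ × Fin N₂) => u₁ p.1 q.1 * u₂ p.2 q.2) = gftToE (Fin N₁ × Fin N₂) x := by
    let BU := (basisOfOrthonormalOfCardEqFinrank honU hcard).toOrthonormalBasis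
      (by rwa [coe_basisOfOrthonormalOfCardEqFinrank])
    have hBU : ∀ p, BU p = gftToE (Fin N₁ × Fin N₂) (fun q : (Fin N₁ × Fin N₂) => u₁ p.1 q.1 * u₂ p.2 q.2) := fun p => by
      simp [BU, Module.Basis.coe_toOrthonormalBasis, coe_basisOfOrthonormalOfCardEqFinrank]
    have h := BU.sum_repr' (gftToE (Fin N₁ × Fin N₂) x)
    rw [← h]
    refine Finset.sum_congr rfl fun p _ => ?_
    rw [hBU, gft_inner_toE, hadef]
  have hxV : ∑ p : (Fin N₁ × Fin N₂), b p • gftToE (Fin N₁ × Fin N₂) (fun q : (Fin N₁ × Fin N₂) => v₁ p.1 q.1 * v₂ p.2 q.2) = gftToE (Fin N₁ × Fin N₂) x := by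
    let BV := (basisOfOrthonormalOfCardEqFinrank honV hcard).toOrthonormalBasis
      (by rwa [coe_basisOfOrthonormalOfCardEqFinrank])
    have hBV : ∀ p, BV p = gftToE (Fin N₁ × Fin N₂) (fun q : (Fin N₁ × Fin N₂) => v₁ p.1 q.1 * v₂ p.2 q.2) := fun p => by
      simp [BV, Module.Basis.coe_toOrthonormalBasis, coe_basisOfOrthonormalOfCardEqFinrank]
    have h := BV.sum_repr' (gftToE (Fin N₁ × Fin N₂) x)
    rw [← h]
    refine Finset.sum_congr rfl fun p _ => ?_
    rw [hBV, gft_inner_toE, hbdef]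
  -- expression of xM
  have hxME : gftToE (Fin N₁ × Fin N₂) xM = (2⁻¹ : ℝ) • ((∑ p ∈ SM, a p • gftToE (Fin N₁ × Fin N₂) (fun q : (Fin N₁ × Fin N₂) => u₁ p.1 q.1 * u₂ p.2 q.2))
      + ∑ p ∈ SM, b p • gftToE (Fin N₁ × Fin N₂) (fun q : (Fin N₁ × Fin N₂) => v₁ p.1 q.1 * v₂ p.2 q.2)) := by
    rw [hxM, _root_.map_smul, map_sum, ← Finset.sum_add_distrib, one_div]
    congr 1
    refine Finset.sum_congr rfl fun p _ => ?_
    rw [add_mulVec, gft_vecMulVec_mulVec, gft_vecMulVec_mulVec, map_add, _root_.map_smul, _root_.map_smul]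
  -- residual
  have hresid : gftToE (Fin N₁ × Fin N₂) x - gftToE (Fin N₁ × Fin N₂) xM
      = (2⁻¹ : ℝ) • (∑ p ∈ SMᶜ, a p • gftToE (Fin N₁ × Fin N₂) (fun q : (Fin N₁ × Fin N₂) => u₁ p.1 q.1 * u₂ p.2 q.2))
      + (2⁻¹ : ℝ) • (∑ p ∈ SMᶜ, b p • gftToE (Fin N₁ × Fin N₂) (fun q : (Fin N₁ × Fin N₂) => v₁ p.1 q.1 * v₂ p.2 q.2)) := by
    have e1 : (∑ p ∈ SMᶜ, a p • gftToE (Fin N₁ × Fin N₂) (fun q : (Fin N₁ × Fin N₂) => u₁ p.1 q.1 * u₂ p.2 q.2))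
        = gftToE (Fin N₁ × Fin N₂) x - ∑ p ∈ SM, a p • gftToE (Fin N₁ × Fin N₂) (fun q : (Fin N₁ × Fin N₂) => u₁ p.1 q.1 * u₂ p.2 q.2) := by
      rw [eq_sub_iff_add_eq, add_comm, Finset.sum_add_sum_compl, hxU]
    have e2 : (∑ p ∈ SMᶜ, b p • gftToE (Fin N₁ × Fin N₂) (fun q : (Fin N₁ × Fin N₂) => v₁ p.1 q.1 * v₂ p.2 q.2))
        = gftToE (Fin N₁ × Fin N₂) x - ∑ p ∈ SM, b p • gftToE (Fin N₁ × Fin N₂) (fun q : (Fin N₁ × Fin N₂) => v₁ p.1 q.1 * v₂ p.2 q.2) := by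
      rw [eq_sub_iff_add_eq, add_comm, Finset.sum_add_sum_compl, hxV]
    rw [hxME, e1, e2]
    module
  -- norm split
  have hnormsplit : ‖gftToE (Fin N₁ × Fin N₂) x - gftToE (Fin N₁ × Fin N₂) xM‖ ≤ 2⁻¹ * Real.sqrt (∑ p ∈ SMᶜ, a p ^ 2)
      + 2⁻¹ * Real.sqrt (∑ p ∈ SMᶜ, b p ^ 2) := by
    rw [hresid]
    refine le_trans (norm_add_le _ _) ?_
    rw [norm_smul, norm_smul, gft_norm_sum_smul honU a SMᶜ, gft_norm_sum_smul honV b SMᶜ]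
    simp [Real.norm_eq_abs]
  -- lower bound on σ-sums outside SM
  have hge : ∀ p ∈ SMᶜ, μstar ≤ σ₁ p.1 + σ₂ p.2 := by
    intro p hp
    rw [Finset.mem_compl] at hp
    have hnot : ¬ ∃ k : Fin (N₁ * N₂), (k : ℕ) < M ∧ σ₁ p.1 + σ₂ p.2 = μ k := by
      intro h
      exact hp (by rw [hSM]; exact Finset.mem_filter.2 ⟨Finset.mem_univ _, h⟩)
    have hep : M ≤ (e p : ℕ) := by
      by_contra h
      push_neg at h
      exact hnot ⟨e p, h, (hμ p).symm⟩
    have h := hμmono (show (⟨M - 1, hM'⟩ : Fin (N₁ * N₂)) ≤ e p by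
      rw [Fin.le_def]; simp; omega)
    rw [hμ p] at h
    exact h
  -- key estimate
  have key : ∀ (c : (Fin N₁ × Fin N₂) → ℝ) (w₁ w₂ : (Fin N₁ × Fin N₂) → EuclideanSpace ℝ (Fin N₁ × Fin N₂)) (y₁ y₂ : (Fin N₁ × Fin N₂) → ℝ),
      Orthonormal ℝ w₁ → Orthonormal ℝ w₂ →
      (∀ p, (σ₁ p.1 + σ₂ p.2) * c p = (inner ℝ (w₁ p) (gftToE (Fin N₁ × Fin N₂) y₁) : ℝ) + (inner ℝ (w₂ p) (gftToE (Fin N₁ × Fin N₂) y₂) : ℝ)) →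
      μstar * Real.sqrt (∑ p ∈ SMᶜ, c p ^ 2)
        ≤ Real.sqrt (∑ i, y₁ i ^ 2) + Real.sqrt (∑ i, y₂ i ^ 2) := by
    intro c w₁ w₂ y₁ y₂ hon1 hon2 hrel
    have step1 : μstar * Real.sqrt (∑ p ∈ SMᶜ, c p ^ 2)
        ≤ Real.sqrt (∑ p ∈ SMᶜ, ((σ₁ p.1 + σ₂ p.2) * c p) ^ 2) := by
      have heq : μstar * Real.sqrt (∑ p ∈ SMᶜ, c p ^ 2)
          = Real.sqrt (∑ p ∈ SMᶜ, μstar ^ 2 * c p ^ 2) := by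
        rw [← Finset.mul_sum, Real.sqrt_mul (sq_nonneg _), Real.sqrt_sq hμstar.le]
      rw [heq]
      apply Real.sqrt_le_sqrt
      refine Finset.sum_le_sum fun p hp => ?_
      rw [mul_pow]
      exact mul_le_mul_of_nonneg_right
        (pow_le_pow_left₀ hμstar.le (hge p hp) 2) (sq_nonneg _)
    have step2 : ∑ p ∈ SMᶜ, ((σ₁ p.1 + σ₂ p.2) * c p) ^ 2
        = ∑ p ∈ SMᶜ, ((inner ℝ (w₁ p) (gftToE (Fin N₁ × Fin N₂) y₁) : ℝ) + (inner ℝ (w₂ p) (gftToE (Fin N₁ × Fin N₂) y₂) : ℝ)) ^ 2 :=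
      Finset.sum_congr rfl fun p _ => by rw [hrel p]
    have step3 := gft_sqrt_sum_sq_add_le SMᶜ (fun p => (inner ℝ (w₁ p) (gftToE (Fin N₁ × Fin N₂) y₁) : ℝ))
      (fun p => (inner ℝ (w₂ p) (gftToE (Fin N₁ × Fin N₂) y₂) : ℝ))
    have step4 : Real.sqrt (∑ p ∈ SMᶜ, (inner ℝ (w₁ p) (gftToE (Fin N₁ × Fin N₂) y₁) : ℝ) ^ 2) ≤ ‖gftToE (Fin N₁ × Fin N₂) y₁‖ :=
      gft_sqrt_bessel hon1 (gftToE (Fin N₁ × Fin N₂) y₁) SMᶜ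
    have step5 : Real.sqrt (∑ p ∈ SMᶜ, (inner ℝ (w₂ p) (gftToE (Fin N₁ × Fin N₂) y₂) : ℝ) ^ 2) ≤ ‖gftToE (Fin N₁ × Fin N₂) y₂‖ :=
      gft_sqrt_bessel hon2 (gftToE (Fin N₁ × Fin N₂) y₂) SMᶜ
    rw [gft_norm_toE] at step4 step5
    calc μstar * Real.sqrt (∑ p ∈ SMᶜ, c p ^ 2)
        ≤ Real.sqrt (∑ p ∈ SMᶜ, ((σ₁ p.1 + σ₂ p.2) * c p) ^ 2) := step1
      _ = Real.sqrt (∑ p ∈ SMᶜ,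
          ((inner ℝ (w₁ p) (gftToE (Fin N₁ × Fin N₂) y₁) : ℝ) + (inner ℝ (w₂ p) (gftToE (Fin N₁ × Fin N₂) y₂) : ℝ)) ^ 2) := by rw [step2]
      _ ≤ _ := le_trans step3 (add_le_add step4 step5)
  -- the four inner product identities
  have rel_a : ∀ p : (Fin N₁ × Fin N₂), (σ₁ p.1 + σ₂ p.2) * a p
      = (inner ℝ (gftToE (Fin N₁ × Fin N₂) (fun q : (Fin N₁ × Fin N₂) => v₁ p.1 q.1 * u₂ p.2 q.2))
          (gftToE (Fin N₁ × Fin N₂) ((L₁ᵀ ⊗ₖ (1 : Matrix (Fin N₂) (Fin N₂) ℝ)).mulVec x)) : ℝ)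
      + (inner ℝ (gftToE (Fin N₁ × Fin N₂) (fun q : (Fin N₁ × Fin N₂) => u₁ p.1 q.1 * v₂ p.2 q.2))
          (gftToE (Fin N₁ × Fin N₂) (((1 : Matrix (Fin N₁) (Fin N₁) ℝ) ⊗ₖ L₂ᵀ).mulVec x)) : ℝ) := by
    intro p
    rw [gft_inner_toE, gft_inner_toE]
    have h1 : dotProduct (fun q : (Fin N₁ × Fin N₂) => v₁ p.1 q.1 * u₂ p.2 q.2)
        ((L₁ᵀ ⊗ₖ (1 : Matrix (Fin N₂) (Fin N₂) ℝ)).mulVec x) = σ₁ p.1 * a p := by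
      rw [show (L₁ᵀ ⊗ₖ (1 : Matrix (Fin N₂) (Fin N₂) ℝ))
          = (L₁ᵀ ⊗ₖ (1 : Matrix (Fin N₂) (Fin N₂) ℝ)ᵀ) by rw [transpose_one],
        gft_dot_kron_mulVec, hL₁v, one_mulVec]
      rw [gft_dot_scaled_left, hadef]
    have h2 : dotProduct (fun q : (Fin N₁ × Fin N₂) => u₁ p.1 q.1 * v₂ p.2 q.2)
        (((1 : Matrix (Fin N₁) (Fin N₁) ℝ) ⊗ₖ L₂ᵀ).mulVec x) = σ₂ p.2 * a p := by
      rw [show ((1 : Matrix (Fin N₁) (Fin N₁) ℝ) ⊗ₖ L₂ᵀ)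
          = ((1 : Matrix (Fin N₁) (Fin N₁) ℝ)ᵀ ⊗ₖ L₂ᵀ) by rw [transpose_one],
        gft_dot_kron_mulVec, hL₂v, one_mulVec]
      rw [gft_dot_scaled_right, hadef]
    rw [h1, h2]
    ring
  have rel_b : ∀ p : (Fin N₁ × Fin N₂), (σ₁ p.1 + σ₂ p.2) * b p
      = (inner ℝ (gftToE (Fin N₁ × Fin N₂) (fun q : (Fin N₁ × Fin N₂) => u₁ p.1 q.1 * v₂ p.2 q.2))
          (gftToE (Fin N₁ × Fin N₂) ((L₁ ⊗ₖ (1 : Matrix (Fin N₂) (Fin N₂) ℝ)).mulVec x)) : ℝ)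
      + (inner ℝ (gftToE (Fin N₁ × Fin N₂) (fun q : (Fin N₁ × Fin N₂) => v₁ p.1 q.1 * u₂ p.2 q.2))
          (gftToE (Fin N₁ × Fin N₂) (((1 : Matrix (Fin N₁) (Fin N₁) ℝ) ⊗ₖ L₂).mulVec x)) : ℝ) := by
    intro p
    rw [gft_inner_toE, gft_inner_toE]
    have h1 : dotProduct (fun q : (Fin N₁ × Fin N₂) => u₁ p.1 q.1 * v₂ p.2 q.2)
        ((L₁ ⊗ₖ (1 : Matrix (Fin N₂) (Fin N₂) ℝ)).mulVec x) = σ₁ p.1 * b p := by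
      rw [show (L₁ ⊗ₖ (1 : Matrix (Fin N₂) (Fin N₂) ℝ))
          = (L₁ᵀᵀ ⊗ₖ (1 : Matrix (Fin N₂) (Fin N₂) ℝ)ᵀ) by
            rw [transpose_transpose, transpose_one],
        gft_dot_kron_mulVec, hL₁t, one_mulVec]
      rw [gft_dot_scaled_left, hbdef]
    have h2 : dotProduct (fun q : (Fin N₁ × Fin N₂) => v₁ p.1 q.1 * u₂ p.2 q.2)
        (((1 : Matrix (Fin N₁) (Fin N₁) ℝ) ⊗ₖ L₂).mulVec x) = σ₂ p.2 * b p := by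
      rw [show ((1 : Matrix (Fin N₁) (Fin N₁) ℝ) ⊗ₖ L₂)
          = ((1 : Matrix (Fin N₁) (Fin N₁) ℝ)ᵀ ⊗ₖ L₂ᵀᵀ) by
            rw [transpose_transpose, transpose_one],
        gft_dot_kron_mulVec, hL₂t, one_mulVec]
      rw [gft_dot_scaled_right, hbdef]
    rw [h1, h2]
    ring
  -- apply the key estimate
  have keyA := key a _ _ _ _ honW honZ rel_a
  have keyB := key b _ _ _ _ honZ honW rel_b
  -- final assembly
  set T₁ := Real.sqrt (∑ i, ((L₁ ⊗ₖ (1 : Matrix (Fin N₂) (Fin N₂) ℝ)).mulVec x i) ^ 2)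
  set T₂ := Real.sqrt (∑ i, ((L₁ᵀ ⊗ₖ (1 : Matrix (Fin N₂) (Fin N₂) ℝ)).mulVec x i) ^ 2)
  set T₃ := Real.sqrt (∑ i, (((1 : Matrix (Fin N₁) (Fin N₁) ℝ) ⊗ₖ L₂).mulVec x i) ^ 2)
  set T₄ := Real.sqrt (∑ i, (((1 : Matrix (Fin N₁) (Fin N₁) ℝ) ⊗ₖ L₂ᵀ).mulVec x i) ^ 2)
  have hLHS : Real.sqrt (∑ i, (x i - xM i) ^ 2) = ‖gftToE (Fin N₁ × Fin N₂) x - gftToE (Fin N₁ × Fin N₂) xM‖ := by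
    rw [← map_sub, gft_norm_toE]
    simp only [Pi.sub_apply]
  have final : Real.sqrt (∑ i, (x i - xM i) ^ 2)
      ≤ (1 / (2 * μstar)) * (T₁ + T₂ + T₃ + T₄) := by
    rw [hLHS]
    have hA : Real.sqrt (∑ p ∈ SMᶜ, a p ^ 2) ≤ (T₂ + T₄) / μstar :=
      (le_div_iff₀' hμstar).2 keyA
    have hB : Real.sqrt (∑ p ∈ SMᶜ, b p ^ 2) ≤ (T₁ + T₃) / μstar :=
      (le_div_iff₀' hμstar).2 keyB
    calc ‖gftToE (Fin N₁ × Fin N₂) x - gftToE (Fin N₁ × Fin N₂) xM‖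
        ≤ 2⁻¹ * Real.sqrt (∑ p ∈ SMᶜ, a p ^ 2) + 2⁻¹ * Real.sqrt (∑ p ∈ SMᶜ, b p ^ 2) :=
          hnormsplit
      _ ≤ 2⁻¹ * ((T₂ + T₄) / μstar) + 2⁻¹ * ((T₁ + T₃) / μstar) := by
          gcongr
      _ = (1 / (2 * μstar)) * (T₁ + T₂ + T₃ + T₄) := by
          field_simp
          ring
  exact final
end

section
/- Suppose L₁ ∈ ℝ^{N₁×N₁}, L₂ ∈ ℝ^{N₂×N₂}, U₁, V₁, U₂, V₂ are orthogonal matrices with L_l = U_l Σ_l V_lᵀ (Σ_l diagonal, nonnegative), and suppose the Kronecker sum L_□ = L₁ ⊗ I_{N₂} + I_{N₁} ⊗ L₂ admits a decomposition L_□ = (U₁⊗U₂) Σ (V₁⊗V₂)ᵀ for some diagonal matrix Σ with nonnegative diagonal entries. If neither L₁ nor L₂ is a scalar multiple of the identity (i.e., {I_{N₁}, L₁} and {I_{N₂}, L₂} are each linearly independent), then L₁ and L₂ are symmetric matrices. -/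
open Matrix
open scoped Kronecker

/-- If `L = U * diagonal σ * Vᵀ` with `U, V` orthogonal and `Vᵀ * U` diagonal,
then `L` is symmetric. -/
lemma symm_of_diag_transition {N : ℕ} (L U V : Matrix (Fin N) (Fin N) ℝ)
    (hU : Uᵀ * U = 1) (hV : Vᵀ * V = 1) (σ : Fin N → ℝ)
    (hL : L = U * diagonal σ * Vᵀ)
    (hP : ∀ i i' : Fin N, i ≠ i' → (Uᵀ * V) i i' = 0) :
    Lᵀ = L := by
  have hV' : V * Vᵀ = 1 := mul_eq_one_comm.mp hV
  set M : Matrix (Fin N) (Fin N) ℝ := (Vᵀ * U) * diagonal σ with hM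
  have hMsymm : Mᵀ = M := by
    ext i j
    rcases eq_or_ne i j with rfl | hij
    · rfl
    · have h1 : M j i = 0 := by
        simp only [hM, Matrix.mul_diagonal]
        have : (Vᵀ * U) j i = (Uᵀ * V) i j := by
          simp [Matrix.mul_apply, mul_comm]
        rw [this, hP i j hij, zero_mul]
      have h2 : M i j = 0 := by
        simp only [hM, Matrix.mul_diagonal]
        have : (Vᵀ * U) i j = (Uᵀ * V) j i := by
          simp [Matrix.mul_apply, mul_comm]
        rw [this, hP j i (Ne.symm hij), zero_mul]
      simp [Matrix.transpose_apply, h1, h2]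
  have hLVM : L = V * M * Vᵀ := by
    rw [hL, hM]
    simp only [← Matrix.mul_assoc]
    rw [hV', Matrix.one_mul]
  rw [hLVM]
  rw [Matrix.transpose_mul, Matrix.transpose_mul, Matrix.transpose_transpose, hMsymm,
    Matrix.mul_assoc, hM]
  simp only [Matrix.mul_assoc]

/-- Matrix form of Theorem 4: if the Kronecker sum `L₁ ⊗ I + I ⊗ L₂` admits an
SVD-type decomposition with Kronecker-product orthogonal factors, and neither
`L₁` nor `L₂` is a scalar multiple of the identity, then `L₁` and `L₂` are
symmetric. -/
theorem gft_coincide_implies_symmetric {N₁ N₂ : ℕ}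
    (L₁ U₁ V₁ : Matrix (Fin N₁) (Fin N₁) ℝ) (L₂ U₂ V₂ : Matrix (Fin N₂) (Fin N₂) ℝ)
    (hU₁ : U₁ᵀ * U₁ = 1) (hV₁ : V₁ᵀ * V₁ = 1)
    (hU₂ : U₂ᵀ * U₂ = 1) (hV₂ : V₂ᵀ * V₂ = 1)
    (σ₁ : Fin N₁ → ℝ) (σ₂ : Fin N₂ → ℝ)
    (hσ₁ : ∀ i, 0 ≤ σ₁ i) (hσ₂ : ∀ j, 0 ≤ σ₂ j)
    (hL₁ : L₁ = U₁ * diagonal σ₁ * V₁ᵀ)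
    (hL₂ : L₂ = U₂ * diagonal σ₂ * V₂ᵀ)
    (d : Fin N₁ × Fin N₂ → ℝ) (hd : ∀ p, 0 ≤ d p)
    (hdecomp : L₁ ⊗ₖ (1 : Matrix (Fin N₂) (Fin N₂) ℝ) +
        (1 : Matrix (Fin N₁) (Fin N₁) ℝ) ⊗ₖ L₂ =
      (U₁ ⊗ₖ U₂) * diagonal d * (V₁ ⊗ₖ V₂)ᵀ)
    (hind₁ : ∀ c : ℝ, L₁ ≠ c • (1 : Matrix (Fin N₁) (Fin N₁) ℝ))
    (hind₂ : ∀ c : ℝ, L₂ ≠ c • (1 : Matrix (Fin N₂) (Fin N₂) ℝ)) :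
    L₁ᵀ = L₁ ∧ L₂ᵀ = L₂ := by
  have hU₁' : U₁ * U₁ᵀ = 1 := mul_eq_one_comm.mp hU₁
  have hU₂' : U₂ * U₂ᵀ = 1 := mul_eq_one_comm.mp hU₂
  set P := U₁ᵀ * V₁ with hP
  set Q := U₂ᵀ * V₂ with hQ
  -- key identity: Σ₁ ⊗ Q + P ⊗ Σ₂ = diagonal d
  have key : (diagonal σ₁) ⊗ₖ Q + P ⊗ₖ (diagonal σ₂) = diagonal d := by
    have h := congrArg (fun M => (U₁ᵀ ⊗ₖ U₂ᵀ) * M * (V₁ ⊗ₖ V₂)) hdecomp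
    simp only [Matrix.add_mul, Matrix.mul_add] at h
    have e1 : (U₁ᵀ ⊗ₖ U₂ᵀ) * (L₁ ⊗ₖ (1 : Matrix (Fin N₂) (Fin N₂) ℝ)) * (V₁ ⊗ₖ V₂)
        = (diagonal σ₁) ⊗ₖ Q := by
      have a1 : U₁ᵀ * (U₁ * diagonal σ₁ * V₁ᵀ) * V₁ = diagonal σ₁ := by
        calc U₁ᵀ * (U₁ * diagonal σ₁ * V₁ᵀ) * V₁
            = (U₁ᵀ * U₁) * diagonal σ₁ * (V₁ᵀ * V₁) := by
              simp only [Matrix.mul_assoc]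
          _ = diagonal σ₁ := by rw [hU₁, hV₁]; simp
      rw [← Matrix.mul_kronecker_mul, ← Matrix.mul_kronecker_mul, hL₁, a1, Matrix.mul_one, ← hQ]
    have e2 : (U₁ᵀ ⊗ₖ U₂ᵀ) * ((1 : Matrix (Fin N₁) (Fin N₁) ℝ) ⊗ₖ L₂) * (V₁ ⊗ₖ V₂)
        = P ⊗ₖ (diagonal σ₂) := by
      have a2 : U₂ᵀ * (U₂ * diagonal σ₂ * V₂ᵀ) * V₂ = diagonal σ₂ := by
        calc U₂ᵀ * (U₂ * diagonal σ₂ * V₂ᵀ) * V₂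
            = (U₂ᵀ * U₂) * diagonal σ₂ * (V₂ᵀ * V₂) := by
              simp only [Matrix.mul_assoc]
          _ = diagonal σ₂ := by rw [hU₂, hV₂]; simp
      rw [← Matrix.mul_kronecker_mul, ← Matrix.mul_kronecker_mul, hL₂, a2, Matrix.mul_one, ← hP]
    have e3 : (U₁ᵀ ⊗ₖ U₂ᵀ) * ((U₁ ⊗ₖ U₂) * diagonal d * (V₁ ⊗ₖ V₂)ᵀ) * (V₁ ⊗ₖ V₂)
        = diagonal d := by
      have t1 : (U₁ᵀ ⊗ₖ U₂ᵀ) * (U₁ ⊗ₖ U₂) = 1 := by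
        rw [← Matrix.mul_kronecker_mul, hU₁, hU₂, Matrix.one_kronecker_one]
      have t2 : (V₁ ⊗ₖ V₂)ᵀ * (V₁ ⊗ₖ V₂) = 1 := by
        rw [← Matrix.kroneckerMap_transpose, ← Matrix.mul_kronecker_mul, hV₁, hV₂,
          Matrix.one_kronecker_one]
      calc (U₁ᵀ ⊗ₖ U₂ᵀ) * ((U₁ ⊗ₖ U₂) * diagonal d * (V₁ ⊗ₖ V₂)ᵀ) * (V₁ ⊗ₖ V₂)
          = ((U₁ᵀ ⊗ₖ U₂ᵀ) * (U₁ ⊗ₖ U₂)) * diagonal d * ((V₁ ⊗ₖ V₂)ᵀ * (V₁ ⊗ₖ V₂)) := by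
            simp only [Matrix.mul_assoc]
        _ = diagonal d := by rw [t1, t2]; simp
    rw [e1, e2, e3] at h
    exact h
  -- σ₁ and σ₂ are not identically zero
  have hσ₁ne : ∃ i, σ₁ i ≠ 0 := by
    by_contra hall
    push_neg at hall
    apply hind₁ 0
    rw [hL₁]
    have : diagonal σ₁ = 0 := by ext i j; simp [Matrix.diagonal_apply, hall]
    simp [this]
  have hσ₂ne : ∃ j, σ₂ j ≠ 0 := by
    by_contra hall
    push_neg at hall
    apply hind₂ 0
    rw [hL₂]
    have : diagonal σ₂ = 0 := by ext i j; simp [Matrix.diagonal_apply, hall]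
    simp [this]
  -- P is diagonal
  have hPdiag : ∀ i i' : Fin N₁, i ≠ i' → P i i' = 0 := by
    intro i i' hii
    obtain ⟨j, hj⟩ := hσ₂ne
    have := congrFun (congrFun key (i, j)) (i', j)
    simp only [Matrix.add_apply, Matrix.kroneckerMap_apply] at this
    rw [Matrix.diagonal_apply_ne _ hii, Matrix.diagonal_apply,
      Matrix.diagonal_apply_ne _ (by simp [Prod.ext_iff, hii] : (i, j) ≠ (i', j))] at this
    simp only [if_pos rfl, zero_mul, zero_add] at this
    exact (mul_eq_zero.mp this).resolve_right hj
  have hQdiag : ∀ j j' : Fin N₂, j ≠ j' → Q j j' = 0 := by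
    intro j j' hjj
    obtain ⟨i, hi⟩ := hσ₁ne
    have := congrFun (congrFun key (i, j)) (i, j')
    simp only [Matrix.add_apply, Matrix.kroneckerMap_apply] at this
    rw [Matrix.diagonal_apply_ne _ hjj, Matrix.diagonal_apply,
      Matrix.diagonal_apply_ne _ (by simp [Prod.ext_iff, hjj] : (i, j) ≠ (i, j'))] at this
    simp only [if_pos rfl, mul_zero, add_zero] at this
    exact (mul_eq_zero.mp this).resolve_left hi
  exact ⟨symm_of_diag_transition L₁ U₁ V₁ hU₁ hV₁ σ₁ hL₁ hPdiag,
    symm_of_diag_transition L₂ U₂ V₂ hU₂ hV₂ σ₂ hL₂ hQdiag⟩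
end
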